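/- In the two-player ISG instance with general rewards defined below, no schedule (π_1, π_2) is a pure Nash equilibrium. -/

import Mathlib

open scoped Classical
noncomputable section

/-- The (1-based) time slot at which service `v` is deployed. -/
def slot {k q : ℕ} (σ : Fin k → Equiv.Perm (Fin q)) (v : Fin k × Fin q) : ℕ :=
  (σ v.1 v.2 : ℕ) + 1

/-- Activation time of `v`: latest deployment among `v` and its in-neighbors. -/
def act {k q : ℕ} (E : Fin k × Fin q → Fin k × Fin q → Prop)
    (σ : Fin k → Equiv.Perm (Fin q)) (v : Fin k × Fin q) : ℕ :=
  (insert v (Finset.univ.filter fun w => E w v)).sup (slot σ)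

/-- Player `i`'s utility under rewards `r`. -/
def utilR {k q : ℕ} (E : Fin k × Fin q → Fin k × Fin q → Prop)
    (r : Fin k × Fin q → ℝ) (σ : Fin k → Equiv.Perm (Fin q)) (i : Fin k) : ℝ :=
  ∑ j : Fin q, r (i, j) * ((q + 1 - act E σ (i, j) : ℕ) : ℝ)

/-- Utilitarian social welfare. -/
def welfareR {k q : ℕ} (E : Fin k × Fin q → Fin k × Fin q → Prop)
    (r : Fin k × Fin q → ℝ) (σ : Fin k → Equiv.Perm (Fin q)) : ℝ :=
  ∑ i : Fin k, utilR E r σ i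

/-- Pure Nash equilibrium: no unilateral deviation improves a player's utility. -/
def PNER {k q : ℕ} (E : Fin k × Fin q → Fin k × Fin q → Prop)
    (r : Fin k × Fin q → ℝ) (σ : Fin k → Equiv.Perm (Fin q)) : Prop :=
  ∀ (i : Fin k) (τ : Equiv.Perm (Fin q)),
    utilR E r (Function.update σ i τ) i ≤ utilR E r σ i

/-- Base edges: (u₁,u₂), (u₂,w₂), (w₁,u₃), (w₃,w₄), (w₄,u₄), with player 1's
services u₁..u₄ at indices (0,0)..(0,3) and player 2's w₁..w₄ at (1,0)..(1,3). -/
def base4 : Fin 2 × Fin 4 → Fin 2 × Fin 4 → Prop := fun v w =>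
  (v, w) ∈ ([((0, 0), (0, 1)), ((0, 1), (1, 1)), ((1, 0), (0, 2)),
             ((1, 2), (1, 3)), ((1, 3), (0, 3))] :
      List ((Fin 2 × Fin 4) × (Fin 2 × Fin 4)))

/-- The dependency relation: transitive closure of the base edges. -/
def E4 : Fin 2 × Fin 4 → Fin 2 × Fin 4 → Prop := Relation.TransGen base4

/-- Rewards: player 1: 1, 4, 3, 2; player 2: 2, 4, 1, 3. -/
def r4 : Fin 2 × Fin 4 → ℝ := fun v => ![![1, 4, 3, 2], ![2, 4, 1, 3]] v.1 v.2

-- auxiliary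
def L4 : List ((Fin 2 × Fin 4) × (Fin 2 × Fin 4)) :=
  [((0, 0), (0, 1)), ((0, 0), (1, 1)), ((0, 1), (1, 1)), ((1, 0), (0, 2)),
   ((1, 2), (1, 3)), ((1, 2), (0, 3)), ((1, 3), (0, 3))]

instance : ∀ v w, Decidable (base4 v w) := fun v w => by unfold base4; infer_instance

lemma base4_sub : ∀ a b : Fin 2 × Fin 4, base4 a b → (a, b) ∈ L4 := by decide

lemma L4_step : ∀ a b c : Fin 2 × Fin 4, (a, b) ∈ L4 → base4 b c → (a, c) ∈ L4 := by
  intro a b c h1 h2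
  fin_cases a <;> fin_cases b <;> fin_cases c <;> revert h1 h2 <;> decide

lemma E4_iff (v w : Fin 2 × Fin 4) : E4 v w ↔ (v, w) ∈ L4 := by
  constructor
  · intro h
    induction h with
    | single h => exact base4_sub _ _ h
    | tail _ h ih => exact L4_step _ _ _ ih h
  · intro h
    have h1 : base4 (0,0) (0,1) := by decide
    have h2 : base4 (0,1) (1,1) := by decide
    have h3 : base4 (1,0) (0,2) := by decide
    have h4 : base4 (1,2) (1,3) := by decide
    have h5 : base4 (1,3) (0,3) := by decide
    simp only [L4, List.mem_cons, List.mem_singleton, List.not_mem_nil, or_false] at h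
    rcases h with h|h|h|h|h|h|h <;>
      rw [Prod.ext_iff] at h <;> obtain ⟨rfl, rfl⟩ := h
    · exact Relation.TransGen.single h1
    · exact Relation.TransGen.tail (Relation.TransGen.single h1) h2
    · exact Relation.TransGen.single h2
    · exact Relation.TransGen.single h3
    · exact Relation.TransGen.single h4
    · exact Relation.TransGen.tail (Relation.TransGen.single h4) h5
    · exact Relation.TransGen.single h5

def actN (σ : Fin 2 → Equiv.Perm (Fin 4)) (v : Fin 2 × Fin 4) : ℕ :=
  (insert v (Finset.univ.filter fun w => (w, v) ∈ L4)).sup (slot σ)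

lemma act_eq (σ : Fin 2 → Equiv.Perm (Fin 4)) (v : Fin 2 × Fin 4) :
    act E4 σ v = actN σ v := by
  unfold act actN
  congr 1
  congr 1
  exact Finset.filter_congr fun w _ => by simpa using E4_iff w v

def rN : Fin 2 × Fin 4 → ℕ := fun v => ![![1, 4, 3, 2], ![2, 4, 1, 3]] v.1 v.2

def utilN (σ : Fin 2 → Equiv.Perm (Fin 4)) (i : Fin 2) : ℕ :=
  ∑ j : Fin 4, rN (i, j) * (5 - actN σ (i, j))

lemma util_eq (σ : Fin 2 → Equiv.Perm (Fin 4)) (i : Fin 2) :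
    utilR E4 r4 σ i = (utilN σ i : ℝ) := by
  unfold utilR utilN
  push_cast
  refine Finset.sum_congr rfl fun j _ => ?_
  rw [act_eq]
  have : r4 (i, j) = (rN (i, j) : ℝ) := by
    fin_cases i <;> fin_cases j <;> simp [r4, rN]
  rw [this]

theorem stmt_4 : ¬ ∃ σ : Fin 2 → Equiv.Perm (Fin 4), PNER E4 r4 σ := by
  rintro ⟨σ, h⟩
  have key : ∀ σ : Fin 2 → Equiv.Perm (Fin 4),
      ∃ (i : Fin 2) (τ : Equiv.Perm (Fin 4)),
        utilN σ i < utilN (Function.update σ i τ) i := by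
    set_option maxRecDepth 100000 in decide
  obtain ⟨i, τ, hlt⟩ := key σ
  have := h i τ
  rw [util_eq, util_eq, Nat.cast_le] at this
  omega
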